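/- arXiv:1608.03871 — 2 statements merged into one kernel-verified Lean document; each statement's English description precedes it below -/
import Mathlib

section
/- Let M be an n×n Hermitian matrix such that every 2×2 principal submatrix indexed by an edge of a cycle C satisfies M restricted to that edge equals v_i v_j^H for some local rank-one completion, i.e., for each edge (i,j) of C there is a vector v^{(i,j)} ∈ ℂ^n with M_{kk} = |v_k^{(i,j)}|² for k ∈ {i,j} and M_{lm} = v_l^{(i,j)} (v_m^{(i,j)})^H for (l,m) ∈ {(i,j),(j,i)}. If additionally the sum of arg(M_{ij}) over an orientation of C is congruent to 0 modulo 2π, then there exists v ∈ ℂ^n with M_{ii} = |v_i|² and M_{ij} = v_i \overline{v_j} for all vertices i and edges (i,j) of C. -/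
private lemma tail_getElem {α : Type*} (l : List α) (i : ℕ) (hi0 : 0 < i)
    (hi : i < l.length) :
    l[i] = l.tail[i-1]'(by cases l with
      | nil => simp at hi
      | cons a t => simp only [List.tail_cons]; simp at hi ⊢; omega) := by
  cases l with
  | nil => simp at hi
  | cons a t =>
    obtain ⟨j, rfl⟩ : ∃ j, i = j + 1 := ⟨i - 1, by omega⟩
    simp

private lemma getElem_idx_congr {α : Type*} {l : List α} {i j : ℕ} (h : i = j)
    (hi : i < l.length) : l[i]'hi = l[j]'(h ▸ hi) := by subst h; rfl

set_option maxHeartbeats 1000000 in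
/-- Matrix completion over a cycle: let `M` be an `n × n` Hermitian matrix whose entries on
the edges of a cycle `C` are nonzero, such that for each edge `(i, j)` of `C` there is a local
rank-one completion `w` with `M_{kk} = |w_k|²` for `k ∈ {i, j}`, `M_{ij} = w_i conj (w_j)` and
`M_{ji} = w_j conj (w_i)`.  If the sum of `arg M_{ij}` over an orientation of `C` is congruent
to `0` modulo `2π`, then there is a vector `u` with `M_{ii} = |u_i|²` for all vertices `i` of
`C` and `M_{ij} = u_i conj (u_j)` for all edges `(i, j)` of `C`. -/
theorem stmt_9 {n : ℕ} (M : Matrix (Fin n) (Fin n) ℂ) (hM : M.IsHermitian)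
    (G : SimpleGraph (Fin n)) {v : Fin n} (c : G.Walk v v) (hc : c.IsCycle)
    (hnz : ∀ d ∈ c.darts, M d.fst d.snd ≠ 0)
    (hloc : ∀ d ∈ c.darts, ∃ w : Fin n → ℂ,
      M d.fst d.fst = (‖w d.fst‖ : ℂ) ^ 2 ∧
      M d.snd d.snd = (‖w d.snd‖ : ℂ) ^ 2 ∧
      M d.fst d.snd = w d.fst * starRingEnd ℂ (w d.snd) ∧
      M d.snd d.fst = w d.snd * starRingEnd ℂ (w d.fst))
    (hsum : ∃ k : ℤ, (c.darts.map fun d => (M d.fst d.snd).arg).sum = 2 * Real.pi * k) :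
    ∃ u : Fin n → ℂ,
      (∀ i ∈ c.support, M i i = (‖u i‖ : ℂ) ^ 2) ∧
      ∀ d ∈ c.darts, M d.fst d.snd = u d.fst * starRingEnd ℂ (u d.snd) := by
  classical
  obtain ⟨k₀, hk₀⟩ := hsum
  set A : List ℝ := c.darts.map (fun d => (M d.fst d.snd).arg) with hA
  set S : List (Fin n) := c.support with hS
  set m : ℕ := c.length with hm
  have hSlen : S.length = m + 1 := c.length_support
  have hDlen : c.darts.length = m := c.length_darts
  have hAlen : A.length = m := by simp [hA, hDlen]
  have hm3 : 3 ≤ m := hc.three_le_length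
  -- diagonal entries at endpoints of darts are real and nonnegative
  have hdiag : ∀ d ∈ c.darts,
      (M d.fst d.fst = ((M d.fst d.fst).re : ℂ) ∧ 0 ≤ (M d.fst d.fst).re) ∧
      (M d.snd d.snd = ((M d.snd d.snd).re : ℂ) ∧ 0 ≤ (M d.snd d.snd).re) := by
    intro d hd
    obtain ⟨w, h1, h2, -, -⟩ := hloc d hd
    refine ⟨⟨?_, ?_⟩, ⟨?_, ?_⟩⟩
    · rw [h1]; simp [← Complex.ofReal_pow]
    · rw [h1]; simp [← Complex.ofReal_pow, sq_nonneg]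
    · rw [h2]; simp [← Complex.ofReal_pow]
    · rw [h2]; simp [← Complex.ofReal_pow, sq_nonneg]
  -- |M_{ij}| = sqrt(M_{ii}) sqrt(M_{jj}) on darts
  have habs : ∀ d ∈ c.darts, (‖M d.fst d.snd‖ : ℝ) =
      Real.sqrt (M d.fst d.fst).re * Real.sqrt (M d.snd d.snd).re := by
    intro d hd
    obtain ⟨w, h1, h2, h3, -⟩ := hloc d hd
    have hf : (M d.fst d.fst).re = (‖w d.fst‖) ^ 2 := by
      rw [h1]; simp [← Complex.ofReal_pow]
    have hs : (M d.snd d.snd).re = (‖w d.snd‖) ^ 2 := by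
      rw [h2]; simp [← Complex.ofReal_pow]
    rw [h3, norm_mul, hf, hs, Real.sqrt_sq (norm_nonneg _),
      Real.sqrt_sq (norm_nonneg _), Complex.norm_conj]
  -- dart endpoints vs support
  have hfst : ∀ (k : ℕ) (hk : k < m),
      (c.darts[k]'(by omega)).fst = S[k]'(by omega) := by
    intro k hk
    have h1 : (c.darts.map (·.fst))[k]'(by simp [hDlen]; omega) =
        (S.dropLast)[k]'(by simp [hSlen]; omega) := by
      simp_rw [c.map_fst_darts]; rfl
    simpa using h1
  have hsnd : ∀ (k : ℕ) (hk : k < m),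
      (c.darts[k]'(by omega)).snd = S[k+1]'(by omega) := by
    intro k hk
    have h1 : (c.darts.map (·.snd))[k]'(by simp [hDlen]; omega) =
        (S.tail)[k]'(by simp [hSlen]; omega) := by
      simp_rw [c.map_snd_darts]; rfl
    simpa using h1
  have hcons : S = v :: S.tail := c.support_eq_cons
  have htnd : S.tail.Nodup := hc.support_nodup
  have hSm : S[m]'(by omega) = v := by
    have h := c.getLast_support
    rw [List.getLast_eq_getElem] at h
    exact (getElem_idx_congr (by simp [hm]) _).trans h
  have hidx0 : S.idxOf v = 0 := by
    rw [hcons]; exact List.idxOf_cons_self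
  have hvt : S.tail[m-1]'(by simp [hSlen]; omega) = v :=
    (tail_getElem S m (by omega) (by omega)).symm.trans hSm
  have hidx : ∀ (k : ℕ) (hk : k < m), S.idxOf (S[k]'(by omega)) = k := by
    intro k hk
    by_cases hk0 : k = 0
    · have h0 : S[k]'(by omega) = v := by
        rw [getElem_idx_congr hk0, List.getElem_of_eq hcons]; rfl
      rw [h0, hidx0, hk0]
    · have hkpos : 0 < k := Nat.pos_of_ne_zero hk0
      have hkt : S[k]'(by omega) = S.tail[k-1]'(by simp [hSlen]; omega) :=
        tail_getElem S k hkpos (by omega)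
      have hne : S[k]'(by omega) ≠ v := by
        intro h
        have h2 : S.tail[k-1]'(by simp [hSlen]; omega) =
            S.tail[m-1]'(by simp [hSlen]; omega) := (hkt.symm.trans h).trans hvt.symm
        have := (htnd.getElem_inj_iff).mp h2
        omega
      rw [show (List.idxOf (S[k]'(by omega)) S) =
            List.idxOf (S[k]'(by omega)) (v :: S.tail) from congrArg _ hcons,
        List.idxOf_cons_ne _ (fun h => hne h.symm), hkt,
        htnd.idxOf_getElem]
      omega
  -- the vector
  obtain ⟨θ, hθ⟩ : ∃ θ : Fin n → ℝ, θ = fun i => -((A.take (S.idxOf i)).sum) := ⟨_, rfl⟩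
  obtain ⟨u, hu⟩ : ∃ u : Fin n → ℂ,
      u = fun i => (Real.sqrt ((M i i).re) : ℂ) * Complex.exp ((θ i : ℝ) * Complex.I) :=
    ⟨_, rfl⟩
  have habsu : ∀ i : Fin n, ‖u i‖ = Real.sqrt ((M i i).re) := by
    intro i
    simp only [hu]
    simp [norm_mul, Complex.norm_exp_ofReal_mul_I, abs_of_nonneg (Real.sqrt_nonneg _)]
  refine ⟨u, ?_, ?_⟩
  · -- diagonal
    intro i hi
    have hdmem : ∃ d ∈ c.darts, d.fst = i := by
      obtain ⟨k, hk, hik⟩ := List.getElem_of_mem hi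
      rw [hSlen] at hk
      rcases Nat.lt_or_ge k m with hkm | hkm
      · exact ⟨c.darts[k]'(by omega), List.getElem_mem _, by rw [hfst k hkm]; exact hik⟩
      · have hkm' : k = m := by omega
        refine ⟨c.darts[0]'(by omega), List.getElem_mem _, ?_⟩
        rw [hfst 0 (by omega)]
        have h0 : S[0]'(by omega) = v := by
          rw [List.getElem_of_eq hcons]; rfl
        rw [h0, ← hik]
        subst hkm'
        exact hSm.symm
    obtain ⟨d, hd, rfl⟩ := hdmem
    obtain ⟨⟨h1, h2⟩, -⟩ := hdiag d hd
    rw [habsu, ← Complex.ofReal_pow, Real.sq_sqrt h2, ← h1]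
  · -- edges
    intro d hd
    obtain ⟨k, hk, hik⟩ := List.getElem_of_mem hd
    rw [hDlen] at hk
    have hfstd : d.fst = S[k]'(by omega) := by rw [← hik]; exact hfst k hk
    have hsndd : d.snd = S[k+1]'(by omega) := by rw [← hik]; exact hsnd k hk
    have hAk : A[k]'(by omega) = (M d.fst d.snd).arg := by
      simp only [hA, List.getElem_map]
      rw [hik]
    have hidxf : S.idxOf d.fst = k := by rw [hfstd]; exact hidx k hk
    have hexps : Complex.exp ((θ d.snd : ℝ) * Complex.I) =
        Complex.exp ((-(((A.take (k+1)).sum) : ℝ) : ℝ) * Complex.I) := by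
      rcases Nat.lt_or_ge (k+1) m with hkm | hkm
      · rw [hθ]
        simp only
        rw [hsndd, hidx (k+1) hkm]
      · have hk1 : k + 1 = m := by omega
        have hsv : d.snd = v := by
          rw [hsndd, getElem_idx_congr hk1]; exact hSm
        have hθs : θ d.snd = 0 := by rw [hθ]; simp [hsv, hidx0]
        have htake : (A.take (k+1)).sum = 2 * Real.pi * k₀ := by
          rw [hk1, ← hAlen, List.take_length]
          exact hk₀
        rw [hθs, htake]
        rw [Complex.ofReal_zero, zero_mul, Complex.exp_zero]
        have : ((-(2 * Real.pi * k₀) : ℝ) : ℂ) * Complex.I = (-k₀ : ℤ) * (2 * Real.pi * Complex.I) := by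
          push_cast; ring
        rw [this, Complex.exp_int_mul_two_pi_mul_I]
    have hsum_take : (A.take (k+1)).sum = (A.take k).sum + (M d.fst d.snd).arg := by
      rw [List.sum_take_succ (L := A) (i := k) (p := by omega), hAk]
    obtain ⟨⟨hf1, hf2⟩, hs1, hs2⟩ := hdiag d hd
    have key : u d.fst * starRingEnd ℂ (u d.snd) =
        (‖M d.fst d.snd‖ : ℂ) * Complex.exp (((M d.fst d.snd).arg : ℝ) * Complex.I) := by
      have huf : u d.fst = (Real.sqrt ((M d.fst d.fst).re) : ℂ) *
          Complex.exp ((-(((A.take k).sum) : ℝ) : ℝ) * Complex.I) := by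
        simp only [hu, hθ, hidxf]
      have hus : u d.snd = (Real.sqrt ((M d.snd d.snd).re) : ℂ) *
          Complex.exp ((-(((A.take (k+1)).sum) : ℝ) : ℝ) * Complex.I) := by
        simp only [hu]
        rw [hexps]
      rw [huf, hus, map_mul, Complex.conj_ofReal, ← Complex.exp_conj]
      have hconj : (starRingEnd ℂ) (((-(((A.take (k+1)).sum) : ℝ) : ℝ) : ℂ) * Complex.I) =
          (((((A.take (k+1)).sum) : ℝ) : ℂ)) * Complex.I := by
        simp [map_mul, Complex.conj_ofReal, Complex.conj_I]
      rw [hconj, habs d hd, hsum_take]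
      rw [mul_mul_mul_comm, ← Complex.exp_add, Complex.ofReal_mul]
      congr 1
      push_cast
      ring
    rw [key, Complex.norm_mul_exp_arg_mul_I]
end

section
/- Suppose f, g₁, …, g_m : ℂ^n → ℝ are real-valued complex polynomials, z^opt is a global minimizer of f over K = {z : g_i(z) ≥ 0 for all i}, and σ₀^opt, …, σ_m^opt ∈ Σ[z] are sums of squared moduli of holomorphic polynomials satisfying f − f(z^opt) = Σ_{i=0}^m σ_i^opt g_i with g₀ = 1. Then complementary slackness holds: σ_i^opt(z^opt) g_i(z^opt) = 0 for i = 0, …, m, and (z^opt, σ₁^opt, …, σ_m^opt) is a saddle point of φ(z, σ) = f(z) − Σ_{i=1}^m σ_i(z) g_i(z) over ℂ^n × Σ[z]^m. -/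
/-- `Σ[z]`: real-valued functions on `ℂⁿ` that are finite sums of squared moduli of
holomorphic polynomials. -/
def SOS (n : ℕ) : Set ((Fin n → ℂ) → ℝ) :=
  {s | ∃ (r : ℕ) (p : Fin r → MvPolynomial (Fin n) ℂ),
    ∀ z, s z = ∑ j, ‖MvPolynomial.eval z (p j)‖ ^ 2}

/-- A real-valued complex polynomial: a real-valued function on `ℂⁿ` given by a polynomial
in `z` and `conj z`. -/
def IsRealComplexPoly {n : ℕ} (f : (Fin n → ℂ) → ℝ) : Prop :=
  ∃ P : MvPolynomial (Fin n ⊕ Fin n) ℂ,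
    ∀ z : Fin n → ℂ,
      (f z : ℂ) = MvPolynomial.eval (Sum.elim z fun i => starRingEnd ℂ (z i)) P

lemma sos_nonneg {n : ℕ} {s : (Fin n → ℂ) → ℝ} (hs : s ∈ SOS n) (z : Fin n → ℂ) :
    0 ≤ s z := by
  obtain ⟨r, p, hp⟩ := hs
  rw [hp]
  exact Finset.sum_nonneg fun j _ => sq_nonneg _

/-- If `zopt` is a global minimizer of the real-valued complex polynomial `f` over
`K = {z | g i z ≥ 0}` and `σ₀, …, σ_m ∈ Σ[z]` satisfy `f - f(zopt) = σ₀ + Σ σ_i g_i`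
(with `g₀ = 1`), then complementary slackness holds: `σ_i(zopt) g_i(zopt) = 0` for all `i`,
and `(zopt, σ₁, …, σ_m)` is a saddle point of `φ(z, σ) = f(z) - Σ σ_i(z) g_i(z)` over
`ℂⁿ × Σ[z]^m`. -/
theorem stmt_16 {n m : ℕ} (f : (Fin n → ℂ) → ℝ) (g : Fin m → (Fin n → ℂ) → ℝ)
    (hf : IsRealComplexPoly f) (hg : ∀ i, IsRealComplexPoly (g i))
    (zopt : Fin n → ℂ) (hfeas : ∀ i, 0 ≤ g i zopt)
    (hmin : ∀ z : Fin n → ℂ, (∀ i, 0 ≤ g i z) → f zopt ≤ f z)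
    (σ₀ : (Fin n → ℂ) → ℝ) (σ : Fin m → (Fin n → ℂ) → ℝ)
    (hσ₀ : σ₀ ∈ SOS n) (hσ : ∀ i, σ i ∈ SOS n)
    (hdecomp : ∀ z, f z - f zopt = σ₀ z + ∑ i, σ i z * g i z) :
    (σ₀ zopt * 1 = 0 ∧ ∀ i, σ i zopt * g i zopt = 0) ∧
    (∀ τ : Fin m → (Fin n → ℂ) → ℝ, (∀ i, τ i ∈ SOS n) →
        f zopt - ∑ i, τ i zopt * g i zopt ≤ f zopt - ∑ i, σ i zopt * g i zopt) ∧
    (∀ z : Fin n → ℂ,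
        f zopt - ∑ i, σ i zopt * g i zopt ≤ f z - ∑ i, σ i z * g i z) := by
  have h0 := hdecomp zopt
  simp only [sub_self] at h0
  have hterms : ∀ i ∈ Finset.univ, 0 ≤ σ i zopt * g i zopt :=
    fun i _ => mul_nonneg (sos_nonneg (hσ i) zopt) (hfeas i)
  have hsum0 : σ₀ zopt = 0 ∧ ∑ i, σ i zopt * g i zopt = 0 := by
    constructor <;> nlinarith [sos_nonneg hσ₀ zopt, Finset.sum_nonneg hterms]
  have heach : ∀ i, σ i zopt * g i zopt = 0 := by
    have := (Finset.sum_eq_zero_iff_of_nonneg hterms).mp hsum0.2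
    exact fun i => this i (Finset.mem_univ i)
  refine ⟨⟨by rw [hsum0.1]; ring, heach⟩, ?_, ?_⟩
  · intro τ hτ
    rw [Finset.sum_congr rfl fun i _ => heach i, Finset.sum_const, smul_zero]
    have : 0 ≤ ∑ i, τ i zopt * g i zopt :=
      Finset.sum_nonneg fun i _ => mul_nonneg (sos_nonneg (hτ i) zopt) (hfeas i)
    linarith
  · intro z
    rw [Finset.sum_congr rfl fun i _ => heach i, Finset.sum_const, smul_zero]
    have := hdecomp z
    have := sos_nonneg hσ₀ z
    linarith
end
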